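/- Let {(N_k, B_k)}_{k=1}^∞ satisfy: 0 ∈ B_k ⊆ ℕ, #B_k ≥ 2, #B_k ≤ N_k, N_k ≥ 2 for all k; the remainder bounded condition ∑_{k=1}^∞ (#B_{k,2})/(#B_k) < ∞ where B_{k,1} = B_k ∩ {0,1,…,N_k−1}, B_{k,2} = B_k \ B_{k,1}; and sup_{k≥1} (log max B_k)/(log N_k) < ∞. Then for every ω ∈ ℕ^ℕ the infinite convolution μ(ω) = δ_{N_{ω₁}^{-1}B_{ω₁}} * δ_{(N_{ω₁}N_{ω₂})^{-1}B_{ω₂}} * ⋯ exists, i.e. ∑_{k=1}^∞ (1/#B_{ω_k}) ∑_{b∈B_{ω_k}} b/(N_{ω₁}⋯N_{ω_k} + b) < ∞. -/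

import Mathlib

open Filter Topology

set_option maxHeartbeats 1000000

theorem stmt13 (N : ℕ → ℕ) (B : ℕ → Finset ℕ)
    (hN : ∀ k, 2 ≤ N k) (h0 : ∀ k, 0 ∈ B k) (hcard : ∀ k, 2 ≤ (B k).card)
    (hle : ∀ k, (B k).card ≤ N k)
    (hRBC : Summable fun k => (((B k).filter fun b => N k ≤ b).card : ℝ) / ((B k).card : ℝ))
    (hsup : ∃ C : ℝ, ∀ k, ∀ b ∈ B k, Real.log (b : ℝ) ≤ C * Real.log (N k : ℝ)) :
    ∀ ω : ℕ → ℕ, Summable fun k =>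
      ((B (ω k)).card : ℝ)⁻¹ *
        ∑ b ∈ B (ω k),
          (b : ℝ) / ((∏ i ∈ Finset.range (k + 1), (N (ω i) : ℝ)) + (b : ℝ)) := by
  obtain ⟨C₀, hC⟩ := hsup
  intro ω
  set M' : ℕ := ⌈C₀⌉₊ + 1 with hM'def
  set M : ℕ := 2 * M' with hMdef
  -- every element of B j is at most (N j)^M'
  have hbound : ∀ j, ∀ b ∈ B j, (b : ℝ) ≤ (N j : ℝ) ^ M' := by
    intro j b hb
    have hN2 : (2:ℝ) ≤ (N j : ℝ) := by exact_mod_cast hN j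
    rcases Nat.eq_zero_or_pos b with h | h
    · rw [h]; push_cast; positivity
    · have h1 : (1:ℝ) ≤ (b:ℝ) := by exact_mod_cast h
      have hlogN : 0 ≤ Real.log (N j) := Real.log_nonneg (by linarith)
      have hlog : Real.log b ≤ Real.log ((N j:ℝ) ^ M') := by
        rw [Real.log_pow]
        calc Real.log b ≤ C₀ * Real.log (N j) := hC j b hb
          _ ≤ (M':ℝ) * Real.log (N j) := by
              apply mul_le_mul_of_nonneg_right _ hlogN
              calc C₀ ≤ (⌈C₀⌉₊:ℝ) := Nat.le_ceil C₀
                _ ≤ (M':ℝ) := by exact_mod_cast Nat.le_succ _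
      exact (Real.log_le_log_iff (by linarith) (by positivity)).mp hlog
  -- occurrence counting
  set m : ℕ → ℕ := fun k => ((Finset.range (k+1)).filter (fun i => ω i = ω k)).card with hmdef
  have hinj : Function.Injective (fun k => (ω k, m k)) := by
    intro k k' h
    simp only [Prod.mk.injEq, hmdef] at h
    obtain ⟨h1, h2⟩ := h
    by_contra hne
    wlog hlt : k < k' generalizing k k'
    · exact this h1.symm h2.symm (Ne.symm hne) (by omega)
    · have hsub : (Finset.range (k+1)).filter (fun i => ω i = ω k) ⊆
          (Finset.range (k'+1)).filter (fun i => ω i = ω k') := by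
        intro i hi
        simp only [Finset.mem_filter, Finset.mem_range] at hi ⊢
        exact ⟨by omega, by rw [hi.2, h1]⟩
      have heq := Finset.eq_of_subset_of_card_le hsub (le_of_eq h2.symm)
      have hmem : k' ∈ (Finset.range (k'+1)).filter (fun i => ω i = ω k') := by
        simp [Finset.mem_filter]
      rw [← heq] at hmem
      simp only [Finset.mem_filter, Finset.mem_range] at hmem
      omega
  set r : ℕ → ℝ := fun j => (((B j).filter fun b => N j ≤ b).card : ℝ) / ((B j).card : ℝ)
    with hrdef
  have hr0 : ∀ j, 0 ≤ r j := fun j => by positivity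
  set F : ℕ × ℕ → ℝ := fun p => r p.1 * (if p.2 < M then 1 else 0) with hFdef
  have hF0 : ∀ p, 0 ≤ F p := by
    intro p
    simp only [hFdef]
    split <;> [simpa using hr0 p.1; simp]
  have hFsummable : Summable F := by
    have hg : Summable (fun i : ℕ => if i < M then (1:ℝ) else 0) := by
      apply summable_of_ne_finset_zero (s := Finset.range M)
      intro i hi
      simp only [Finset.mem_range] at hi
      simp [hi]
    exact hRBC.mul_of_nonneg hg hr0 (fun i => by show (0:ℝ) ≤ (if i < M then 1 else 0); split <;> norm_num)
  have hh : Summable (fun k => F (ω k, m k)) := hFsummable.comp_injective hinj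
  set s : ℝ := (Real.sqrt 2)⁻¹ with hsdef
  have hs0 : 0 ≤ s := by positivity
  have hs1 : s < 1 := by
    rw [hsdef, inv_lt_one_iff₀]
    right
    have : (1:ℝ) < Real.sqrt 2 := by
      rw [show (1:ℝ) = Real.sqrt 1 by simp]
      exact Real.sqrt_lt_sqrt (by norm_num) (by norm_num)
    linarith
  have hssq : s ^ 2 = 2⁻¹ := by
    rw [hsdef, inv_pow, Real.sq_sqrt (by norm_num : (0:ℝ) ≤ 2)]
  have hmaj : Summable (fun k => ((2:ℝ)⁻¹)^k + s^k + F (ω k, m k)) :=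
    ((summable_geometric_of_lt_one (by norm_num) (by norm_num)).add
      (summable_geometric_of_lt_one hs0 hs1)).add hh
  apply Summable.of_nonneg_of_le _ _ hmaj
  · intro k
    refine mul_nonneg (by positivity) (Finset.sum_nonneg fun b _ => div_nonneg (by positivity) ?_)
    positivity
  · intro k
    set n := ω k with hndef
    set P := ∏ i ∈ Finset.range (k+1), (N (ω i):ℝ) with hPdef
    have hc : (0:ℝ) < ((B n).card : ℝ) := by
      have := hcard n
      exact_mod_cast Nat.lt_of_lt_of_le (by norm_num) this
    have hN2 : (2:ℝ) ≤ (N n : ℝ) := by exact_mod_cast hN n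
    have hf2 : ∀ j ∈ Finset.range (k+1), (2:ℝ) ≤ (N (ω j):ℝ) := fun j _ => by
      exact_mod_cast hN (ω j)
    have hPge : (2:ℝ)^(k+1) ≤ P := by
      calc (2:ℝ)^(k+1) = ∏ _i ∈ Finset.range (k+1), (2:ℝ) := by simp
        _ ≤ P := Finset.prod_le_prod (fun i _ => by norm_num) hf2
    have hPpos : 0 < P := lt_of_lt_of_le (by positivity) hPge
    -- P ≥ 2^k * N n
    have hPge2 : (2:ℝ)^k * (N n : ℝ) ≤ P := by
      rw [hPdef, Finset.prod_range_succ, ← hndef]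
      have hQ : (2:ℝ)^k ≤ ∏ i ∈ Finset.range k, (N (ω i):ℝ) := by
        calc (2:ℝ)^k = ∏ _i ∈ Finset.range k, (2:ℝ) := by simp
          _ ≤ _ := Finset.prod_le_prod (fun i _ => by norm_num)
              (fun i _ => by exact_mod_cast hN (ω i))
      exact mul_le_mul_of_nonneg_right hQ (by linarith)
    -- P ≥ (N n)^(m k)
    have hPgeN : ((N n:ℝ))^(m k) ≤ P := by
      have heq : ∏ i ∈ (Finset.range (k+1)).filter (fun i => ω i = ω k), (N (ω i):ℝ)
          = ((N n:ℝ))^(m k) := by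
        rw [hmdef]
        rw [Finset.prod_congr rfl (fun i hi => ?_), Finset.prod_const]
        simp only [Finset.mem_filter] at hi
        rw [hi.2, hndef]
      have hsplitP : P = (∏ i ∈ (Finset.range (k+1)).filter (fun i => ω i = ω k), (N (ω i):ℝ))
          * ∏ i ∈ (Finset.range (k+1)).filter (fun i => ¬ ω i = ω k), (N (ω i):ℝ) :=
        (Finset.prod_filter_mul_prod_filter_not _ _ _).symm
      have hQ : (1:ℝ) ≤ ∏ i ∈ (Finset.range (k+1)).filter (fun i => ¬ ω i = ω k), (N (ω i):ℝ) := by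
        calc (1:ℝ) = ∏ _i ∈ (Finset.range (k+1)).filter (fun i => ¬ ω i = ω k), (1:ℝ) := by simp
          _ ≤ _ := Finset.prod_le_prod (fun i _ => by norm_num) (fun i _ => by
              have h : (2:ℝ) ≤ ((N (ω i):ℝ)) := by exact_mod_cast hN (ω i)
              linarith)
      calc ((N n:ℝ))^(m k) = ((N n:ℝ))^(m k) * 1 := by ring
        _ ≤ ((N n:ℝ))^(m k) *
            ∏ i ∈ (Finset.range (k+1)).filter (fun i => ¬ ω i = ω k), (N (ω i):ℝ) :=
          mul_le_mul_of_nonneg_left hQ (by positivity)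
        _ = P := by rw [hsplitP, heq]
    have hsplit : ∑ b ∈ B n, (b:ℝ)/(P + b) =
        (∑ b ∈ (B n).filter (fun b => N n ≤ b), (b:ℝ)/(P + b))
        + ∑ b ∈ (B n).filter (fun b => ¬ N n ≤ b), (b:ℝ)/(P + b) :=
      (Finset.sum_filter_add_sum_filter_not _ _ _).symm
    -- small part bound
    have hsmallsum : ((B n).card : ℝ)⁻¹ *
        (∑ b ∈ (B n).filter (fun b => ¬ N n ≤ b), (b:ℝ)/(P + b)) ≤ ((2:ℝ)⁻¹)^k := by
      have hterm : ∀ b ∈ (B n).filter (fun b => ¬ N n ≤ b), (b:ℝ)/(P+b) ≤ ((2:ℝ)⁻¹)^k := by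
        intro b hb
        simp only [Finset.mem_filter, not_le] at hb
        have hbN : (b:ℝ) ≤ (N n : ℝ) := by exact_mod_cast hb.2.le
        have hb0 : (0:ℝ) ≤ (b:ℝ) := by positivity
        have h1 : (b:ℝ)/(P+b) ≤ (N n:ℝ)/((2:ℝ)^k * (N n:ℝ)) := by
          apply div_le_div₀ (by linarith) hbN (by positivity) (by linarith)
        have h2 : (N n:ℝ)/((2:ℝ)^k * (N n:ℝ)) = ((2:ℝ)⁻¹)^k := by
          rw [inv_pow]
          field_simp
        linarith [h1, h2.le]
      calc ((B n).card : ℝ)⁻¹ * _ ≤ ((B n).card : ℝ)⁻¹ *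
            (((B n).filter (fun b => ¬ N n ≤ b)).card * ((2:ℝ)⁻¹)^k) := by
            apply mul_le_mul_of_nonneg_left _ (by positivity)
            calc ∑ b ∈ (B n).filter (fun b => ¬ N n ≤ b), (b:ℝ)/(P + b)
                ≤ ∑ _b ∈ (B n).filter (fun b => ¬ N n ≤ b), ((2:ℝ)⁻¹)^k :=
                  Finset.sum_le_sum hterm
              _ = _ := by rw [Finset.sum_const, nsmul_eq_mul]
        _ ≤ ((B n).card : ℝ)⁻¹ * (((B n).card : ℝ) * ((2:ℝ)⁻¹)^k) := by
            apply mul_le_mul_of_nonneg_left _ (by positivity)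
            apply mul_le_mul_of_nonneg_right _ (by positivity)
            exact Nat.cast_le.mpr (Finset.card_le_card (Finset.filter_subset _ _))
        _ = ((2:ℝ)⁻¹)^k := inv_mul_cancel_left₀ hc.ne' _
    -- big part bound
    have hbigsum : ((B n).card : ℝ)⁻¹ *
        (∑ b ∈ (B n).filter (fun b => N n ≤ b), (b:ℝ)/(P + b)) ≤ s^k + F (ω k, m k) := by
      by_cases hm : m k < M
      · -- use the RBC quantity
        have hF : F (ω k, m k) = r n := by simp [hFdef, hm, hndef]
        have hterm : ∀ b ∈ (B n).filter (fun b => N n ≤ b), (b:ℝ)/(P+b) ≤ 1 := by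
          intro b hb
          exact div_le_one_of_le₀ (le_add_of_nonneg_left hPpos.le) (by positivity)
        have : ((B n).card : ℝ)⁻¹ *
            (∑ b ∈ (B n).filter (fun b => N n ≤ b), (b:ℝ)/(P + b)) ≤ r n := by
          rw [hrdef]
          calc ((B n).card : ℝ)⁻¹ * _ ≤ ((B n).card : ℝ)⁻¹ *
              ((((B n).filter (fun b => N n ≤ b)).card : ℝ)) := by
                apply mul_le_mul_of_nonneg_left _ (by positivity)
                calc ∑ b ∈ (B n).filter (fun b => N n ≤ b), (b:ℝ)/(P + b)
                    ≤ ∑ _b ∈ (B n).filter (fun b => N n ≤ b), (1:ℝ) :=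
                      Finset.sum_le_sum hterm
                  _ = _ := by rw [Finset.sum_const, nsmul_eq_mul, mul_one]
            _ = (((B n).filter fun b => N n ≤ b).card : ℝ) / ((B n).card : ℝ) := by
                rw [inv_mul_eq_div]
        have hsk : (0:ℝ) ≤ s^k := by positivity
        linarith [hF.symm.le, this]
      · -- use the geometric bound
        push_neg at hm
        have hkey : ((N n:ℝ))^M' / P ≤ s^k := by
          have hNM : (0:ℝ) < ((N n:ℝ))^M' := by positivity
          have hPNM : ((N n:ℝ))^M' * ((N n:ℝ))^M' ≤ P := by
            calc ((N n:ℝ))^M' * ((N n:ℝ))^M' = ((N n:ℝ))^M := by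
                  rw [hMdef, ← pow_add, two_mul]
              _ ≤ ((N n:ℝ))^(m k) := pow_le_pow_right₀ (by linarith) hm
              _ ≤ P := hPgeN
          have hsq : (((N n:ℝ))^M' / P)^2 ≤ (s^k)^2 := by
            have h2k : ((2:ℝ))^k ≤ P := le_trans (by
              apply pow_le_pow_right₀ (by norm_num) (Nat.le_succ k)) hPge
            have hP2 : (((N n:ℝ))^M' * ((N n:ℝ))^M') * (2:ℝ)^k ≤ P * P :=
              mul_le_mul hPNM h2k (by positivity) (by positivity)
            have hrhs : (s^k)^2 = ((2:ℝ)⁻¹)^k := by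
              rw [← pow_mul, mul_comm, pow_mul, hssq]
            rw [hrhs, div_pow, inv_pow, inv_eq_one_div,
              div_le_div_iff₀ (by positivity) (by positivity)]
            calc (((N n:ℝ))^M')^2 * (2:ℝ)^k
                = (((N n:ℝ))^M' * ((N n:ℝ))^M') * (2:ℝ)^k := by ring
              _ ≤ P * P := hP2
              _ = 1 * P^2 := by ring
          have ha : (0:ℝ) ≤ ((N n:ℝ))^M' / P := by positivity
          calc ((N n:ℝ))^M' / P = Real.sqrt ((((N n:ℝ))^M' / P)^2) :=
                (Real.sqrt_sq ha).symm
            _ ≤ Real.sqrt ((s^k)^2) := Real.sqrt_le_sqrt hsq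
            _ = s^k := Real.sqrt_sq (by positivity)
        have hterm : ∀ b ∈ (B n).filter (fun b => N n ≤ b), (b:ℝ)/(P+b) ≤ ((N n:ℝ))^M' / P := by
          intro b hb
          simp only [Finset.mem_filter] at hb
          have hbb := hbound n b hb.1
          exact div_le_div₀ (by positivity) hbb hPpos (le_add_of_nonneg_right (by positivity))
        have : ((B n).card : ℝ)⁻¹ *
            (∑ b ∈ (B n).filter (fun b => N n ≤ b), (b:ℝ)/(P + b)) ≤ s^k := by
          calc ((B n).card : ℝ)⁻¹ * _ ≤ ((B n).card : ℝ)⁻¹ *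
              ((((B n).filter (fun b => N n ≤ b)).card : ℝ) * (((N n:ℝ))^M' / P)) := by
                apply mul_le_mul_of_nonneg_left _ (by positivity)
                calc ∑ b ∈ (B n).filter (fun b => N n ≤ b), (b:ℝ)/(P + b)
                    ≤ ∑ _b ∈ (B n).filter (fun b => N n ≤ b), ((N n:ℝ))^M' / P :=
                      Finset.sum_le_sum hterm
                  _ = _ := by rw [Finset.sum_const, nsmul_eq_mul]
            _ ≤ ((B n).card : ℝ)⁻¹ * (((B n).card : ℝ) * (((N n:ℝ))^M' / P)) := by
                apply mul_le_mul_of_nonneg_left _ (by positivity)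
                apply mul_le_mul_of_nonneg_right _ (by positivity)
                exact Nat.cast_le.mpr (Finset.card_le_card (Finset.filter_subset _ _))
            _ = ((N n:ℝ))^M' / P := inv_mul_cancel_left₀ hc.ne' _
            _ ≤ s^k := hkey
        have hFk : (0:ℝ) ≤ F (ω k, m k) := hF0 _
        linarith
    calc ((B n).card : ℝ)⁻¹ * ∑ b ∈ B n, (b:ℝ)/(P + b)
        = ((B n).card : ℝ)⁻¹ *
            (∑ b ∈ (B n).filter (fun b => N n ≤ b), (b:ℝ)/(P + b))
          + ((B n).card : ℝ)⁻¹ *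
            (∑ b ∈ (B n).filter (fun b => ¬ N n ≤ b), (b:ℝ)/(P + b)) := by
          rw [hsplit, mul_add]
      _ ≤ (s^k + F (ω k, m k)) + ((2:ℝ)⁻¹)^k := add_le_add hbigsum hsmallsum
      _ = ((2:ℝ)⁻¹)^k + s^k + F (ω k, m k) := by ring
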